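/- Let (R, m) be a commutative Noetherian local ring and let M be a finitely generated R-module fitting into an exact sequence 0 → M →^i R^{⊕n} → X → 0 with depth_R(X) ≥ depth(R). If M ∈ DF(R), then im(i) ⊄ m·R^{⊕n}; that is, M is not a minimal syzygy of X. -/

import Mathlib

open IsLocalRing

/-- The depth of a module `M` over a Noetherian local ring `(R, m)`: the supremum of the
lengths of `M`-regular sequences consisting of elements of `m`. -/
noncomputable def rdepth (R : Type*) (M : Type*) [CommRing R] [IsLocalRing R]
    [AddCommGroup M] [Module R M] : ℕ :=
  sSup {n : ℕ | ∃ rs : List R, rs.length = n ∧ (∀ r ∈ rs, r ∈ maximalIdeal R) ∧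
    RingTheory.Sequence.IsRegular M rs}

/-- `Deep(R)`: the class of finitely generated `R`-modules `M` with `depth_R(M) ≥ depth(R)`. -/
def Deep (R : Type*) (M : Type*) [CommRing R] [IsLocalRing R]
    [AddCommGroup M] [Module R M] : Prop :=
  Module.Finite R M ∧ rdepth R R ≤ rdepth R M

universe u v

/-- `DF(R)` ("deeply faithful"): the class of finitely generated `R`-modules `M` admitting an
exact sequence `0 → R → M^{⊕n} → X → 0` with `X ∈ Deep(R)`. -/
def DF (R : Type u) (M : Type v) [CommRing R] [IsLocalRing R]
    [AddCommGroup M] [Module R M] : Prop :=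
  ∃ (n : ℕ) (X : Type v) (_ : AddCommGroup X) (_ : Module R X)
    (f : R →ₗ[R] (Fin n → M)) (g : (Fin n → M) →ₗ[R] X),
      Function.Injective f ∧ Function.Surjective g ∧ Function.Exact f g ∧ Deep R X


set_option linter.unusedSectionVars false

section Auxiliary

open IsLocalRing Submodule RingTheory.Sequence Pointwise


namespace NMS

variable {R : Type*} [CommRing R]

section AssFinite

variable [IsNoetherianRing R] {V : Type*} [AddCommGroup V] [Module R V]

lemma ann_span_smul_eq_of_prime {P : Ideal R} (hP : P.IsPrime) {w : V}
    (hw : P = (Submodule.span R {w}).annihilator) {b : R} (hb : b • w ≠ 0) :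
    (Submodule.span R {b • w}).annihilator = P := by
  ext a
  rw [Submodule.mem_annihilator_span_singleton]
  constructor
  · intro h
    have hab : a * b ∈ P := by
      rw [hw, Submodule.mem_annihilator_span_singleton, mul_smul]
      exact h
    rcases hP.mem_or_mem hab with h' | h'
    · exact h'
    · exact absurd ((Submodule.mem_annihilator_span_singleton _ _).mp (hw ▸ h')) hb
  · intro ha
    have : a • w = 0 := (Submodule.mem_annihilator_span_singleton _ _).mp (hw ▸ ha)
    rw [smul_comm, this, smul_zero]

lemma ne_zero_of_isAssociatedPrime {P : Ideal R} (hP : P.IsPrime) {w : V}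
    (hw : P = (Submodule.span R {w}).annihilator) : w ≠ 0 := by
  rintro rfl
  rw [Submodule.span_singleton_eq_bot.mpr rfl, Submodule.annihilator_bot] at hw
  exact hP.ne_top hw

lemma isAssociatedPrime_ann {P : Ideal R} (h : IsAssociatedPrime P V) :
    P.IsPrime ∧ ∃ w : V, P = (Submodule.span R {w}).annihilator := by
  obtain ⟨hp, w, hw⟩ := isAssociatedPrime_iff.mp h
  refine ⟨hp, w, ?_⟩
  rw [hw]
  ext a
  rw [Submodule.mem_colon_singleton, Submodule.mem_bot, Submodule.mem_annihilator_span_singleton]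

lemma isAssociatedPrime_of_ann {P : Ideal R} (hp : P.IsPrime) (w : V)
    (hw : P = (Submodule.span R {w}).annihilator) : IsAssociatedPrime P V := by
  refine isAssociatedPrime_iff.mpr ⟨hp, w, ?_⟩
  rw [hw]
  ext a
  rw [Submodule.mem_colon_singleton, Submodule.mem_bot, Submodule.mem_annihilator_span_singleton]

theorem ass_quot_finite (V) [AddCommGroup V] [Module R V] [IsNoetherian R V] :
    ∀ N : Submodule R V, (associatedPrimes R (V ⧸ N)).Finite := by
  have wf : WellFounded ((· > ·) : Submodule R V → Submodule R V → Prop) :=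
    (isNoetherian_iff (R := R) (M := V)).mp inferInstance
  intro N
  induction N using WellFounded.induction wf with
  | _ N ih =>
  by_cases hsub : Subsingleton (V ⧸ N)
  · rw [associatedPrimes.eq_empty_of_subsingleton]; exact Set.finite_empty
  · have : Nontrivial (V ⧸ N) := not_subsingleton_iff_nontrivial.mp hsub
    obtain ⟨P, hP⟩ := associatedPrimes.nonempty R (V ⧸ N)
    obtain ⟨hPp, wb, hweq⟩ := isAssociatedPrime_ann hP
    have hwb : wb ≠ 0 := ne_zero_of_isAssociatedPrime hPp hweq
    set N' : Submodule R V := Submodule.comap N.mkQ (Submodule.span R {wb}) with hN'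
    obtain ⟨w, hw⟩ := Submodule.Quotient.mk_surjective N wb
    have hNN' : N < N' := by
      constructor
      · intro x hx
        have : N.mkQ x = 0 := by simpa [Submodule.mkQ_apply, Submodule.Quotient.mk_eq_zero]
        show x ∈ Submodule.comap N.mkQ (Submodule.span R {wb})
        rw [Submodule.mem_comap, this]; exact Submodule.zero_mem _
      · intro hle
        have hwN' : w ∈ N' := by
          simp only [hN', Submodule.mem_comap, Submodule.mkQ_apply, hw]
          exact Submodule.mem_span_singleton_self wb
        have := hle hwN'
        exact hwb (by rw [← hw]; simpa [Submodule.Quotient.mk_eq_zero] using this)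
    have key : associatedPrimes R (V ⧸ N) ⊆ insert P (associatedPrimes R (V ⧸ N')) := by
      intro Q hQmem
      obtain ⟨hQp, ub, hueq⟩ := isAssociatedPrime_ann hQmem
      have hub : ub ≠ 0 := ne_zero_of_isAssociatedPrime hQp hueq
      by_cases hcap : ∃ c : R, c • ub ≠ 0 ∧ c • ub ∈ Submodule.span R {wb}
      · left
        obtain ⟨c, hc0, hcmem⟩ := hcap
        obtain ⟨b, hb⟩ := Submodule.mem_span_singleton.mp hcmem
        have h1 : (Submodule.span R {c • ub}).annihilator = Q :=
          ann_span_smul_eq_of_prime hQp hueq hc0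
        have h2 : (Submodule.span R {b • wb}).annihilator = P :=
          ann_span_smul_eq_of_prime hPp hweq (by rw [hb]; exact hc0)
        rw [← h1, ← hb, h2]
      · right
        push_neg at hcap
        -- Q ∈ Ass ((V⧸N)⧸ span {wb}) and transfer
        have hQ' : IsAssociatedPrime Q ((V ⧸ N) ⧸ (Submodule.span R {wb})) := by
          refine isAssociatedPrime_of_ann hQp (Submodule.Quotient.mk ub) ?_
          ext a
          rw [Submodule.mem_annihilator_span_singleton]
          have : a • (Submodule.Quotient.mk ub : (V ⧸ N) ⧸ (Submodule.span R {wb}))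
              = Submodule.Quotient.mk (a • ub) := rfl
          rw [this, Submodule.Quotient.mk_eq_zero]
          constructor
          · intro haQ
            have : a • ub = 0 := by
              rw [hueq, Submodule.mem_annihilator_span_singleton] at haQ; exact haQ
            rw [this]; exact Submodule.zero_mem _
          · intro hmem
            have : a • ub = 0 := by
              by_contra hne
              exact (hcap a hne) hmem
            rw [hueq, Submodule.mem_annihilator_span_singleton]
            exact this
        have hmap : N'.map N.mkQ = Submodule.span R {wb} := by
          rw [hN', Submodule.map_comap_eq_of_surjective (Submodule.mkQ_surjective N)]
        have e : ((V ⧸ N) ⧸ (N'.map N.mkQ)) ≃ₗ[R] V ⧸ N' :=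
          Submodule.quotientQuotientEquivQuotient N N' hNN'.le
        rw [hmap] at e
        exact (e.isAssociatedPrime_iff).mp hQ'
    exact Set.Finite.subset (Set.Finite.insert P (ih N' hNN')) key

theorem ass_finite (V : Type*) [AddCommGroup V] [Module R V] [IsNoetherian R V] :
    (associatedPrimes R V).Finite := by
  have := ass_quot_finite (R := R) V ⊥
  rwa [LinearEquiv.AssociatedPrimes.eq (Submodule.quotEquivOfEqBot (⊥ : Submodule R V) rfl)] at this

end AssFinite

section Socle

variable [IsNoetherianRing R] [IsLocalRing R]

/-- If every element of the maximal ideal is a zerodivisor on a nontrivial f.g. module,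
then the module has a nonzero socle element. -/
theorem socle_exists (V : Type*) [AddCommGroup V] [Module R V] [Module.Finite R V]
    [Nontrivial V] (h : ∀ a ∈ maximalIdeal R, ¬ IsSMulRegular V a) :
    ∃ v : V, v ≠ 0 ∧ ∀ a ∈ maximalIdeal R, a • v = 0 := by
  haveI : IsNoetherian R V := inferInstance
  have hfin : (associatedPrimes R V).Finite := ass_finite (R := R) V
  obtain ⟨P₀, hP₀⟩ := associatedPrimes.nonempty R V
  have hsub : (maximalIdeal R : Set R) ⊆ ⋃ p ∈ hfin.toFinset, (id p : Ideal R) := by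
    intro r hr
    have : r ∈ ({r : R | IsSMulRegular V r}ᶜ : Set R) := h r hr
    rw [← biUnion_associatedPrimes_eq_compl_regular R V] at this
    simpa [Set.Finite.mem_toFinset] using this
  have hprime : ∀ p ∈ hfin.toFinset, p ≠ P₀ → p ≠ P₀ → (id p : Ideal R).IsPrime := by
    intro p hp _ _
    exact ((Set.Finite.mem_toFinset hfin).mp hp).isPrime
  obtain ⟨P, hPmem, hle⟩ := (Ideal.subset_union_prime P₀ P₀ hprime).mp hsub
  have hPass : IsAssociatedPrime P V := (Set.Finite.mem_toFinset hfin).mp hPmem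
  obtain ⟨hPp, x, hxeq⟩ := isAssociatedPrime_ann hPass
  refine ⟨x, ne_zero_of_isAssociatedPrime hPp hxeq, fun a ha => ?_⟩
  have : a ∈ P := hle ha
  rw [hxeq, Submodule.mem_annihilator_span_singleton] at this
  exact this

end Socle

section P2


variable {R : Type*} [CommRing R]

section Basic

lemma isSMulRegular_of_subsingleton {V : Type*} [AddCommGroup V] [Module R V]
    [Subsingleton V] (r : R) : IsSMulRegular V r :=
  fun a b _ => Subsingleton.elim a b

lemma isWeaklyRegular_of_subsingleton (V : Type*) [AddCommGroup V] [Module R V]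
    [Subsingleton V] (rs : List R) : IsWeaklyRegular V rs := by
  refine ⟨fun i h => ?_⟩
  haveI : Subsingleton (V ⧸ (Ideal.ofList (rs.take i) • ⊤ : Submodule R V)) :=
    (Submodule.mkQ_surjective _).subsingleton
  exact isSMulRegular_of_subsingleton _

lemma isSMulRegular_prod_iff {A B : Type*} [AddCommGroup A] [Module R A]
    [AddCommGroup B] [Module R B] {z : R} :
    IsSMulRegular (A × B) z ↔ IsSMulRegular A z ∧ IsSMulRegular B z := by
  constructor
  · intro h
    constructor
    · intro a b hab
      have : z • ((a, (0 : B))) = z • ((b, (0 : B))) := by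
        rw [Prod.smul_mk, Prod.smul_mk]
        exact Prod.ext hab rfl
      exact congrArg Prod.fst (h this)
    · intro a b hab
      have : z • (((0 : A), a)) = z • (((0 : A), b)) := by
        rw [Prod.smul_mk, Prod.smul_mk]
        exact Prod.ext rfl hab
      exact congrArg Prod.snd (h this)
  · rintro ⟨h1, h2⟩ p q hpq
    have h1' : z • p.1 = z • q.1 := congrArg Prod.fst hpq
    have h2' : z • p.2 = z • q.2 := congrArg Prod.snd hpq
    exact Prod.ext (h1 h1') (h2 h2')

end Basic

section Local

variable [IsLocalRing R] [IsNoetherianRing R]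

/-- Nakayama: quotient of a nontrivial f.g. module by `J•⊤`, `J ≤ m`, is nontrivial. -/
lemma quot_smul_top_nontrivial (V : Type*) [AddCommGroup V] [Module R V]
    [Module.Finite R V] [Nontrivial V] {J : Ideal R} (hJ : J ≤ maximalIdeal R) :
    Nontrivial (V ⧸ (J • ⊤ : Submodule R V)) := by
  have hann : Module.annihilator R V ≠ ⊤ := by
    intro h
    have : (1 : R) ∈ Module.annihilator R V := h ▸ Submodule.mem_top
    have h0 : ∀ v : V, v = 0 := fun v => by
      have := Module.mem_annihilator.mp this v
      simpa using this
    obtain ⟨a, b, hab⟩ := exists_pair_ne V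
    exact hab ((h0 a).trans (h0 b).symm)
  have hne : (⊤ : Submodule R V) ≠ J • ⊤ := by
    apply Submodule.top_ne_ideal_smul_of_le_jacobson_annihilator
    rw [IsLocalRing.jacobson_eq_maximalIdeal _ hann]
    exact hJ
  exact Submodule.Quotient.nontrivial_iff.mpr (Ne.symm hne)

/-- An element of `J` is not regular on a nontrivial quotient `V ⧸ J•⊤`. -/
lemma not_isSMulRegular_quot_of_mem {V : Type*} [AddCommGroup V] [Module R V]
    {J : Ideal R} {z : R} (hz : z ∈ J)
    [Nontrivial (V ⧸ (J • ⊤ : Submodule R V))] :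
    ¬ IsSMulRegular (V ⧸ (J • ⊤ : Submodule R V)) z := by
  intro hreg
  have hkill : ∀ q : V ⧸ (J • ⊤ : Submodule R V), z • q = 0 := by
    intro q
    obtain ⟨v, rfl⟩ := Submodule.Quotient.mk_surjective _ q
    have : z • v ∈ (J • ⊤ : Submodule R V) := Submodule.smul_mem_smul hz Submodule.mem_top
    show Submodule.Quotient.mk (z • v) = 0
    rwa [Submodule.Quotient.mk_eq_zero]
  obtain ⟨a, b, hab⟩ := exists_pair_ne (V ⧸ (J • ⊤ : Submodule R V))
  exact hab (hreg (show z • a = z • b by rw [hkill a, hkill b]))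

variable {V : Type*} [AddCommGroup V] [Module R V] [Module.Finite R V]

/-- Swap a length-2 weakly regular sequence over a local ring. -/
lemma swap_regular {x z : R} (hx : x ∈ maximalIdeal R) (hz : z ∈ maximalIdeal R)
    (hxV : IsSMulRegular V x) (hzQ : IsSMulRegular (QuotSMulTop x V) z) :
    IsSMulRegular V z ∧ IsSMulRegular (QuotSMulTop z V) x := by
  have h1 : IsWeaklyRegular V [x, z] := by
    rw [isWeaklyRegular_cons_iff]
    exact ⟨hxV, by rwa [isWeaklyRegular_singleton_iff]⟩
  have hperm : List.Perm [x, z] [z, x] := List.Perm.swap z x []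
  have h2 : IsWeaklyRegular V [z, x] :=
    IsLocalRing.isWeaklyRegular_of_perm_of_subset_maximalIdeal h1 hperm
      (by
        intro r hr
        simp only [List.mem_cons, List.not_mem_nil, or_false] at hr
        rcases hr with rfl | rfl
        · exact hx
        · exact hz)
  rw [isWeaklyRegular_cons_iff, isWeaklyRegular_singleton_iff] at h2
  exact h2

/-- The swap equivalence `(V/aV)/b ≃ (V/bV)/a`. -/
noncomputable def quotSMulTopComm (a b : R) (V : Type*) [AddCommGroup V] [Module R V] :
    QuotSMulTop b (QuotSMulTop a V) ≃ₗ[R] QuotSMulTop a (QuotSMulTop b V) := by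
  have e₂ : ∀ (c d : R), ((QuotSMulTop c V) ⧸ (Ideal.ofList [d] • ⊤ :
      Submodule R (QuotSMulTop c V))) ≃ₗ[R] QuotSMulTop d (QuotSMulTop c V) := fun c d =>
    Submodule.quotEquivOfEq _ _
      (by rw [Ideal.ofList_singleton, Submodule.ideal_span_singleton_smul])
  have hlist : (Ideal.ofList [a, b] : Ideal R) = Ideal.ofList [b, a] := by
    simp [Ideal.ofList_cons, Ideal.ofList_singleton]
    rw [sup_comm]
  exact (e₂ a b).symm ≪≫ₗ
    (Submodule.quotOfListConsSMulTopEquivQuotSMulTopInner V a [b]).symm ≪≫ₗ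
    (Submodule.quotEquivOfEq _ _ (by rw [hlist])) ≪≫ₗ
    (Submodule.quotOfListConsSMulTopEquivQuotSMulTopInner V b [a]) ≪≫ₗ
    (e₂ b a)

end Local


end P2

end NMS

namespace NMS

variable {R : Type*} [CommRing R] [IsNoetherianRing R] [IsLocalRing R]

/-- Every element of the maximal ideal fails to be regular. -/
def NoReg (R : Type*) [CommRing R] [IsLocalRing R]
    (V : Type*) [AddCommGroup V] [Module R V] : Prop :=
  ∀ a ∈ maximalIdeal R, ¬ IsSMulRegular V a

lemma mem_pointwise_smul_top_iff {V : Type*} [AddCommGroup V] [Module R V] (x : R) (v : V) :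
    v ∈ x • (⊤ : Submodule R V) ↔ ∃ w, x • w = v := by
  constructor
  · intro h
    have : v ∈ (↑(x • (⊤ : Submodule R V)) : Set V) := h
    rw [Submodule.coe_pointwise_smul] at this
    obtain ⟨w, _, rfl⟩ := this
    exact ⟨w, rfl⟩
  · rintro ⟨w, rfl⟩
    exact Submodule.smul_mem_pointwise_smul w x ⊤ Submodule.mem_top

section PA

variable (V₁ V₂ V₃ : Type*) [AddCommGroup V₁] [Module R V₁] [Module.Finite R V₁]
  [AddCommGroup V₂] [Module R V₂] [Module.Finite R V₂]
  [AddCommGroup V₃] [Module R V₃] [Module.Finite R V₃]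

/-- "Prime avoidance": three f.g. modules each admitting a regular element in `m` admit a
common regular element in `m`. -/
lemma exists_common_regular [Nontrivial V₁]
    (h₁ : ∃ z ∈ maximalIdeal R, IsSMulRegular V₁ z)
    (h₂ : ∃ z ∈ maximalIdeal R, IsSMulRegular V₂ z)
    (h₃ : ∃ z ∈ maximalIdeal R, IsSMulRegular V₃ z) :
    ∃ z ∈ maximalIdeal R, IsSMulRegular V₁ z ∧ IsSMulRegular V₂ z ∧ IsSMulRegular V₃ z := by
  by_cases hnr : NoReg R (V₁ × V₂ × V₃)
  · exfalso
    obtain ⟨s, hs0, hskill⟩ := socle_exists (V₁ × V₂ × V₃) hnr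
    have hcomp : s.1 ≠ 0 ∨ s.2.1 ≠ 0 ∨ s.2.2 ≠ 0 := by
      by_contra hc
      push_neg at hc
      exact hs0 (Prod.ext hc.1 (Prod.ext hc.2.1 hc.2.2))
    rcases hcomp with hc | hc | hc
    · obtain ⟨z, hz, hreg⟩ := h₁
      have : z • s.1 = 0 := by
        have := hskill z hz
        exact congrArg Prod.fst this
      exact hc (hreg (show z • s.1 = z • 0 by rw [smul_zero, this]))
    · obtain ⟨z, hz, hreg⟩ := h₂
      have : z • s.2.1 = 0 := congrArg (fun p => p.2.1) (hskill z hz)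
      exact hc (hreg (show z • s.2.1 = z • 0 by rw [smul_zero, this]))
    · obtain ⟨z, hz, hreg⟩ := h₃
      have : z • s.2.2 = 0 := congrArg (fun p => p.2.2) (hskill z hz)
      exact hc (hreg (show z • s.2.2 = z • 0 by rw [smul_zero, this]))
  · simp only [NoReg, not_forall] at hnr
    obtain ⟨z, hzm, hz⟩ := hnr
    rw [not_not] at hz
    rw [isSMulRegular_prod_iff, isSMulRegular_prod_iff] at hz
    exact ⟨z, hzm, hz.1, hz.2.1, hz.2.2⟩

end PA

section K1

variable {V : Type*} [AddCommGroup V] [Module R V] [Module.Finite R V] [Nontrivial V]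

lemma quotSMulTop_nontrivial {x : R} (hx : x ∈ maximalIdeal R) :
    Nontrivial (QuotSMulTop x V) := by
  show Nontrivial (V ⧸ (x • ⊤ : Submodule R V))
  rw [← Submodule.ideal_span_singleton_smul]
  exact quot_smul_top_nontrivial V
    ((Ideal.span_le).mpr (by simpa using hx))

/-- Kaplansky's exchange lemma: if `x, y` are regular on `V` and `m` consists of
zerodivisors on `V/xV` then the same holds for `V/yV`. -/
lemma noReg_exchange {x y : R} (hx : x ∈ maximalIdeal R) (hy : y ∈ maximalIdeal R)
    (hxV : IsSMulRegular V x) (hyV : IsSMulRegular V y)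
    (h : NoReg R (QuotSMulTop x V)) : NoReg R (QuotSMulTop y V) := by
  haveI : Nontrivial (QuotSMulTop x V) := quotSMulTop_nontrivial hx
  obtain ⟨ub, hu0, hukill⟩ := socle_exists (QuotSMulTop x V) h
  obtain ⟨u, hu⟩ := Submodule.Quotient.mk_surjective _ ub
  have humem : u ∉ x • (⊤ : Submodule R V) := by
    intro hmem
    exact hu0 (by rw [← hu, Submodule.Quotient.mk_eq_zero]; exact hmem)
  have hkill : ∀ a ∈ maximalIdeal R, a • u ∈ x • (⊤ : Submodule R V) := by
    intro a ha
    have : (Submodule.Quotient.mk (a • u) : QuotSMulTop x V) = 0 := by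
      rw [show (Submodule.Quotient.mk (a • u) : QuotSMulTop x V) = a • ub by rw [← hu]; rfl]
      exact hukill a ha
    rwa [Submodule.Quotient.mk_eq_zero] at this
  obtain ⟨v, hv⟩ := (mem_pointwise_smul_top_iff x (y • u)).mp (hkill y hy)
  -- v is a socle element mod y
  have hv0 : v ∉ y • (⊤ : Submodule R V) := by
    intro hmem
    obtain ⟨v', hv'⟩ := (mem_pointwise_smul_top_iff y v).mp hmem
    apply humem
    exact (mem_pointwise_smul_top_iff x u).mpr
      ⟨v', hyV (show y • (x • v') = y • u by rw [smul_comm y x v', hv', hv])⟩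
  have hvkill : ∀ a ∈ maximalIdeal R, a • v ∈ y • (⊤ : Submodule R V) := by
    intro a ha
    obtain ⟨w, hw⟩ := (mem_pointwise_smul_top_iff x (a • u)).mp (hkill a ha)
    refine (mem_pointwise_smul_top_iff y (a • v)).mpr ⟨w, hxV ?_⟩
    calc x • y • w = y • x • w := smul_comm _ _ _
    _ = y • a • u := by rw [hw]
    _ = a • y • u := smul_comm _ _ _
    _ = a • x • v := by rw [hv]
    _ = x • a • v := smul_comm _ _ _
  intro a ha hreg
  have hmkv : a • (Submodule.Quotient.mk v : QuotSMulTop y V) = 0 := by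
    show (Submodule.Quotient.mk (a • v) : QuotSMulTop y V) = 0
    rw [Submodule.Quotient.mk_eq_zero]
    exact hvkill a ha
  have hz : (Submodule.Quotient.mk v : QuotSMulTop y V) = 0 :=
    hreg (show a • (Submodule.Quotient.mk v : QuotSMulTop y V) = a • (0 : QuotSMulTop y V) by
      rw [smul_zero, hmkv])
  exact hv0 ((Submodule.Quotient.mk_eq_zero _).mp hz)

end K1

end NMS

section Part4


namespace NMS

universe uu uu₁ uu₂ uu₃

variable {R : Type*} [CommRing R] [IsNoetherianRing R] [IsLocalRing R]

/-- Kaplansky exchange for sequences: a length-`s` weakly regular sequence on `V/yV` can be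
converted into one on `V/xV`. -/
lemma exchange_seq : ∀ (s : ℕ) (V : Type uu) [AddCommGroup V] [Module R V]
    [Module.Finite R V] (x y : R), x ∈ maximalIdeal R → y ∈ maximalIdeal R →
    IsSMulRegular V x → IsSMulRegular V y →
    ∀ ys : List R, (∀ a ∈ ys, a ∈ maximalIdeal R) → ys.length = s →
    IsWeaklyRegular (QuotSMulTop y V) ys →
    ∃ ts : List R, (∀ a ∈ ts, a ∈ maximalIdeal R) ∧ ts.length = s ∧
      IsWeaklyRegular (QuotSMulTop x V) ts := by
  intro s
  induction s with
  | zero =>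
    intro V _ _ _ x y _ _ _ _ ys _ hlen _
    exact ⟨[], by simp, rfl, IsWeaklyRegular.nil R _⟩
  | succ s ih =>
    intro V _ _ _ x y hx hy hxV hyV ys hysm hlen hysreg
    rcases ys with _ | ⟨w, ws⟩
    · simp at hlen
    by_cases hV : Subsingleton V
    · refine ⟨List.replicate (s+1) y, ?_, List.length_replicate .., ?_⟩
      · intro a ha
        rw [List.eq_of_mem_replicate ha]
        exact hy
      · haveI : Subsingleton (QuotSMulTop x V) :=
          (Submodule.mkQ_surjective _).subsingleton
        exact isWeaklyRegular_of_subsingleton _ _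
    haveI : Nontrivial V := not_subsingleton_iff_nontrivial.mp hV
    rw [isWeaklyRegular_cons_iff] at hysreg
    obtain ⟨hwreg, hwsreg⟩ := hysreg
    have hwm : w ∈ maximalIdeal R := hysm w (by simp)
    have hwsm : ∀ a ∈ ws, a ∈ maximalIdeal R := fun a ha => hysm a (by simp [ha])
    have hlen' : ws.length = s := by simpa using hlen
    have hQx : ∃ z ∈ maximalIdeal R, IsSMulRegular (QuotSMulTop x V) z := by
      by_contra hc
      push_neg at hc
      have hnr : NoReg R (QuotSMulTop x V) := fun a ha hreg => hc a ha hreg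
      exact (noReg_exchange hx hy hxV hyV hnr) w hwm hwreg
    obtain ⟨z, hzm, hzV, hzQx, hzQy⟩ :=
      exists_common_regular V (QuotSMulTop x V) (QuotSMulTop y V)
        ⟨x, hx, hxV⟩ hQx ⟨w, hwm, hwreg⟩
    obtain ⟨ws', hws'm, hws'len, hws'reg⟩ :=
      ih (QuotSMulTop y V) z w hzm hwm hzQy hwreg ws hwsm hlen' hwsreg
    have hws'reg2 : IsWeaklyRegular (QuotSMulTop y (QuotSMulTop z V)) ws' :=
      ((quotSMulTopComm y z V).isWeaklyRegular_congr ws').mp hws'reg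
    have hxQz : IsSMulRegular (QuotSMulTop z V) x := (swap_regular hx hzm hxV hzQx).2
    have hyQz : IsSMulRegular (QuotSMulTop z V) y := (swap_regular hy hzm hyV hzQy).2
    obtain ⟨ts', hts'm, hts'len, hts'reg⟩ :=
      ih (QuotSMulTop z V) x y hx hy hxQz hyQz ws' hws'm hws'len hws'reg2
    have hts'reg2 : IsWeaklyRegular (QuotSMulTop z (QuotSMulTop x V)) ts' :=
      ((quotSMulTopComm z x V).isWeaklyRegular_congr ts').mp hts'reg
    refine ⟨z :: ts', ?_, by simp [hts'len], ?_⟩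
    · intro a ha
      rcases List.mem_cons.mp ha with rfl | ha
      · exact hzm
      · exact hts'm a ha
    · exact (isWeaklyRegular_cons_iff _ _ _).mpr ⟨hzQx, hts'reg2⟩

/-- All weakly regular sequences are at most as long as a maximal one. -/
lemma maximal_seq_bound : ∀ (xs : List R) (V : Type uu) [AddCommGroup V] [Module R V]
    [Module.Finite R V], Nontrivial V → (∀ a ∈ xs, a ∈ maximalIdeal R) →
    IsWeaklyRegular V xs →
    NoReg R (V ⧸ (Ideal.ofList xs • ⊤ : Submodule R V)) →
    ∀ ys : List R, (∀ a ∈ ys, a ∈ maximalIdeal R) → IsWeaklyRegular V ys →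
      ys.length ≤ xs.length := by
  intro xs
  induction xs with
  | nil =>
    intro V _ _ _ hnt _ _ hnr ys hysm hysreg
    have e : (V ⧸ (Ideal.ofList ([] : List R) • ⊤ : Submodule R V)) ≃ₗ[R] V :=
      Submodule.quotEquivOfEqBot _ (by simp)
    have hnrV : NoReg R V := fun a ha hreg =>
      hnr a ha ((e.isSMulRegular_congr a).mpr hreg)
    cases ys with
    | nil => simp
    | cons y ys' =>
      rw [isWeaklyRegular_cons_iff] at hysreg
      exact absurd hysreg.1 (hnrV y (hysm y (by simp)))
  | cons x xs' ih =>
    intro V _ _ _ hnt hxsm hxsreg hnr ys hysm hysreg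
    haveI := hnt
    cases ys with
    | nil => simp
    | cons y ys' =>
      rw [isWeaklyRegular_cons_iff] at hxsreg hysreg
      obtain ⟨hxV, hxs'⟩ := hxsreg
      obtain ⟨hyV, hys'⟩ := hysreg
      have hxm : x ∈ maximalIdeal R := hxsm x (by simp)
      have hym : y ∈ maximalIdeal R := hysm y (by simp)
      have e := Submodule.quotOfListConsSMulTopEquivQuotSMulTopInner V x xs'
      have hnr' : NoReg R ((QuotSMulTop x V) ⧸
          (Ideal.ofList xs' • ⊤ : Submodule R (QuotSMulTop x V))) :=
        fun a ha hreg => hnr a ha ((e.isSMulRegular_congr a).mpr hreg)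
      obtain ⟨ts, htsm, htslen, htsreg⟩ :=
        exchange_seq ys'.length V x y hxm hym hxV hyV ys'
          (fun a ha => hysm a (by simp [ha])) rfl hys'
      haveI : Nontrivial (QuotSMulTop x V) := quotSMulTop_nontrivial hxm
      have hbound := ih (QuotSMulTop x V) inferInstance
        (fun a ha => hxsm a (by simp [ha])) hxs' hnr' ts htsm htsreg
      simp only [List.length_cons]
      omega
      -- need: ys'.length + 1 ≤ xs'.length + 1 from htslen : ts.length = ys'.length and hbound

/-- Greedy extension of a simultaneous weakly regular sequence to a maximal one. -/
lemma greedy (A : Type uu₁) (B : Type uu₂) (C : Type uu₃)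
    [AddCommGroup A] [Module R A] [Module.Finite R A] [Nontrivial A]
    [AddCommGroup B] [Module R B] [Module.Finite R B]
    [AddCommGroup C] [Module R C] [Module.Finite R C]
    (xs₀ : List R) (hm₀ : ∀ a ∈ xs₀, a ∈ maximalIdeal R)
    (hA₀ : IsWeaklyRegular A xs₀) (hB₀ : IsWeaklyRegular B xs₀)
    (hC₀ : IsWeaklyRegular C xs₀) :
    ∃ zs : List R, (∀ a ∈ zs, a ∈ maximalIdeal R) ∧ IsWeaklyRegular A zs ∧
      IsWeaklyRegular B zs ∧ IsWeaklyRegular C zs ∧ xs₀.length ≤ zs.length ∧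
      NoReg R ((A ⧸ (Ideal.ofList zs • ⊤ : Submodule R A)) ×
               (B ⧸ (Ideal.ofList zs • ⊤ : Submodule R B)) ×
               (C ⧸ (Ideal.ofList zs • ⊤ : Submodule R C))) := by
  have wf : WellFounded ((· > ·) : Ideal R → Ideal R → Prop) :=
    (isNoetherian_iff (R := R) (M := R)).mp inferInstance
  suffices H : ∀ J : Ideal R, ∀ xs : List R, Ideal.ofList xs = J →
      (∀ a ∈ xs, a ∈ maximalIdeal R) → IsWeaklyRegular A xs → IsWeaklyRegular B xs →
      IsWeaklyRegular C xs →
      ∃ zs : List R, (∀ a ∈ zs, a ∈ maximalIdeal R) ∧ IsWeaklyRegular A zs ∧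
        IsWeaklyRegular B zs ∧ IsWeaklyRegular C zs ∧ xs.length ≤ zs.length ∧
        NoReg R ((A ⧸ (Ideal.ofList zs • ⊤ : Submodule R A)) ×
               (B ⧸ (Ideal.ofList zs • ⊤ : Submodule R B)) ×
               (C ⧸ (Ideal.ofList zs • ⊤ : Submodule R C))) by
    exact H _ xs₀ rfl hm₀ hA₀ hB₀ hC₀
  intro J
  induction J using WellFounded.induction wf with
  | _ J ih =>
  intro xs hxs hm hA hB hC
  by_cases hnr : NoReg R ((A ⧸ (Ideal.ofList xs • ⊤ : Submodule R A)) ×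
               (B ⧸ (Ideal.ofList xs • ⊤ : Submodule R B)) ×
               (C ⧸ (Ideal.ofList xs • ⊤ : Submodule R C)))
  · exact ⟨xs, hm, hA, hB, hC, le_refl _, hnr⟩
  · simp only [NoReg, not_forall] at hnr
    obtain ⟨z, hzm, hz⟩ := hnr
    rw [not_not, isSMulRegular_prod_iff, isSMulRegular_prod_iff] at hz
    obtain ⟨hzA, hzB, hzC⟩ := hz
    have hJm : Ideal.ofList xs ≤ maximalIdeal R := by
      rw [Ideal.span_le]
      intro r hr
      exact hm r hr
    have hzJ : z ∉ Ideal.ofList xs := by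
      intro hzin
      haveI : Nontrivial (A ⧸ (Ideal.ofList xs • ⊤ : Submodule R A)) :=
        quot_smul_top_nontrivial A hJm
      exact not_isSMulRegular_quot_of_mem hzin hzA
    have hofnew : Ideal.ofList (xs ++ [z]) = J ⊔ Ideal.span {z} := by
      rw [Ideal.ofList_append, hxs, Ideal.ofList_singleton]
    have hgt : J ⊔ Ideal.span {z} > J := by
      rw [gt_iff_lt, lt_iff_le_and_ne]
      refine ⟨le_sup_left, fun h => ?_⟩
      apply hzJ
      rw [hxs, h]
      exact le_sup_right (α := Ideal R) (Ideal.subset_span rfl : z ∈ Ideal.span {z})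
    have hmem' : ∀ a ∈ xs ++ [z], a ∈ maximalIdeal R := by
      intro a ha
      rcases List.mem_append.mp ha with ha | ha
      · exact hm a ha
      · rw [List.mem_singleton.mp ha]; exact hzm
    have happA : IsWeaklyRegular A (xs ++ [z]) := by
      rw [isWeaklyRegular_append_iff]
      exact ⟨hA, by rwa [isWeaklyRegular_singleton_iff]⟩
    have happB : IsWeaklyRegular B (xs ++ [z]) := by
      rw [isWeaklyRegular_append_iff]
      exact ⟨hB, by rwa [isWeaklyRegular_singleton_iff]⟩
    have happC : IsWeaklyRegular C (xs ++ [z]) := by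
      rw [isWeaklyRegular_append_iff]
      exact ⟨hC, by rwa [isWeaklyRegular_singleton_iff]⟩
    obtain ⟨zs, h1, h2, h3, h4, h5, h6⟩ :=
      ih (J ⊔ Ideal.span {z}) hgt (xs ++ [z]) hofnew hmem' happA happB happC
    refine ⟨zs, h1, h2, h3, h4, ?_, h6⟩
    have h5' : xs.length + 1 ≤ zs.length := by simpa using h5
    omega

end NMS


end Part4

section Part5



namespace NMS

universe uu

variable {R : Type*} [CommRing R] [IsNoetherianRing R] [IsLocalRing R]

lemma rdepth_eq_of_maximal (V : Type uu) [AddCommGroup V] [Module R V] [Module.Finite R V]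
    [Nontrivial V] {zs : List R} (hm : ∀ a ∈ zs, a ∈ maximalIdeal R)
    (hreg : IsWeaklyRegular V zs)
    (hnr : NoReg R (V ⧸ (Ideal.ofList zs • ⊤ : Submodule R V))) :
    rdepth R V = zs.length := by
  have hub : ∀ n ∈ {n : ℕ | ∃ rs : List R, rs.length = n ∧
      (∀ r ∈ rs, r ∈ maximalIdeal R) ∧ RingTheory.Sequence.IsRegular V rs},
      n ≤ zs.length := by
    rintro n ⟨rs, rfl, hrsm, hrsreg⟩
    exact maximal_seq_bound zs V inferInstance hm hreg hnr rs hrsm hrsreg.toIsWeaklyRegular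
  have hmem : zs.length ∈ {n : ℕ | ∃ rs : List R, rs.length = n ∧
      (∀ r ∈ rs, r ∈ maximalIdeal R) ∧ RingTheory.Sequence.IsRegular V rs} :=
    ⟨zs, rfl, hm,
      (IsLocalRing.isRegular_iff_isWeaklyRegular_of_subset_maximalIdeal hm).mpr hreg⟩
  exact le_antisymm (csSup_le ⟨zs.length, hmem⟩ hub) (le_csSup ⟨zs.length, hub⟩ hmem)

lemma rdepth_ge_of_wreg (V : Type uu) [AddCommGroup V] [Module R V] [Module.Finite R V]
    [Nontrivial V] {xs : List R} (hm : ∀ a ∈ xs, a ∈ maximalIdeal R)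
    (hreg : IsWeaklyRegular V xs) : xs.length ≤ rdepth R V := by
  obtain ⟨zs, h1, h2, _, _, h5, h6⟩ := greedy V V V xs hm hreg hreg hreg
  have hnr : NoReg R (V ⧸ (Ideal.ofList zs • ⊤ : Submodule R V)) := fun a ha hr =>
    h6 a ha (by rw [isSMulRegular_prod_iff, isSMulRegular_prod_iff]; exact ⟨hr, hr, hr⟩)
  rw [rdepth_eq_of_maximal V h1 h2 hnr]
  exact h5

section Geometry

variable {A B C : Type*} [AddCommGroup A] [Module R A] [AddCommGroup B] [Module R B]
  [AddCommGroup C] [Module R C]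

/-- If `0 → A → B → C → 0` is exact and `rs` is weakly regular on `C`, then
`A/rsA → B/rsB` is injective. -/
lemma mem_smul_top_of_apply_mem_smul_top {f : A →ₗ[R] B} {g : B →ₗ[R] C}
    (hf : Function.Injective f) (hfg : Function.Exact f g) (hg : Function.Surjective g)
    {rs : List R} (hreg : IsWeaklyRegular C rs) {a : A}
    (ha : f a ∈ (Ideal.ofList rs • ⊤ : Submodule R B)) :
    a ∈ (Ideal.ofList rs • ⊤ : Submodule R A) := by
  have h0 : Function.Exact (0 : PUnit.{1} →ₗ[R] A) f := by
    intro y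
    constructor
    · intro hy
      exact ⟨PUnit.unit, (hf (by rw [hy, map_zero] : f y = f 0)).symm⟩
    · rintro ⟨u, rfl⟩
      simp
  have hex := RingTheory.Sequence.map_first_exact_on_four_term_right_exact_of_isSMulRegular_last
    (rs := rs) h0 hfg hg hreg
  have hz : Submodule.mapQ _ _ f (Submodule.smul_top_le_comap_smul_top (Ideal.ofList rs) f)
      (Submodule.Quotient.mk a) = 0 := by
    rw [Submodule.mapQ_apply]
    rwa [Submodule.Quotient.mk_eq_zero]
  obtain ⟨q, hq⟩ := (hex _).mp hz
  obtain ⟨u, rfl⟩ := Submodule.Quotient.mk_surjective _ q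
  rw [Submodule.mapQ_apply] at hq
  rw [← Submodule.Quotient.mk_eq_zero]
  rw [← hq]
  simp

end Geometry

lemma pi_mem_smul_top {k : ℕ} {V : Type*} [AddCommGroup V] [Module R V] (I : Ideal R)
    {w : Fin k → V} (h : ∀ j, w j ∈ (I • ⊤ : Submodule R V)) :
    w ∈ (I • ⊤ : Submodule R (Fin k → V)) := by
  have hw : w = ∑ j, Pi.single j (w j) := (Finset.univ_sum_single w).symm
  rw [hw]
  apply Submodule.sum_mem
  intro j _
  have hle : Submodule.map (LinearMap.single R (fun _ : Fin k => V) j)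
      (I • (⊤ : Submodule R V)) ≤ (I • ⊤ : Submodule R (Fin k → V)) := by
    rw [Submodule.map_smul'' I (⊤ : Submodule R V) (LinearMap.single R (fun _ : Fin k => V) j)]
    exact smul_mono_right I
      (le_top : Submodule.map (LinearMap.single R (fun _ : Fin k => V) j) ⊤ ≤ ⊤)
  exact hle (Submodule.mem_map_of_mem (h j))

lemma smul_socle_mem {V : Type*} [AddCommGroup V] [Module R V] (I : Ideal R) {r : R}
    (hr : ∀ a ∈ maximalIdeal R, a * r ∈ I) {w : V}
    (hw : w ∈ ((maximalIdeal R) • ⊤ : Submodule R V)) :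
    r • w ∈ (I • ⊤ : Submodule R V) := by
  refine Submodule.smul_induction_on hw ?_ ?_
  · intro a ha v _
    rw [smul_smul]
    exact Submodule.smul_mem_smul (by rw [mul_comm]; exact hr a ha) Submodule.mem_top
  · intro u v hu hv
    rw [smul_add]
    exact Submodule.add_mem _ hu hv

end NMS


end Part5

section Part6

open NMS RingTheory.Sequence IsLocalRing

theorem not_minimal_syzygy' {R M X : Type*} [CommRing R] [IsNoetherianRing R] [IsLocalRing R]
    [AddCommGroup M] [Module R M] [Module.Finite R M]
    [AddCommGroup X] [Module R X] [Module.Finite R X]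
    {n : ℕ} (i : M →ₗ[R] (Fin n → R)) (p : (Fin n → R) →ₗ[R] X)
    (hi : Function.Injective i) (hp : Function.Surjective p) (hexact : Function.Exact i p)
    (hdeep : rdepth R R ≤ rdepth R X)
    {k : ℕ} {Y : Type*} [AddCommGroup Y] [Module R Y]
    (f : R →ₗ[R] (Fin k → M)) (g : (Fin k → M) →ₗ[R] Y)
    (hf : Function.Injective f) (hg : Function.Surjective g) (hfg : Function.Exact f g)
    (hYfin : Module.Finite R Y) (hYdeep : rdepth R R ≤ rdepth R Y) :
    ¬ (LinearMap.range i ≤ (maximalIdeal R) • (⊤ : Submodule R (Fin n → R))) := by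
  intro h
  haveI := hYfin
  obtain ⟨xs, hxm, hwR, hwX, hwY, -, hnr⟩ :=
    greedy R X Y [] (by simp) (IsWeaklyRegular.nil R R) (IsWeaklyRegular.nil R X)
      (IsWeaklyRegular.nil R Y)
  have hIm : Ideal.ofList xs ≤ maximalIdeal R := by
    rw [Ideal.span_le]; intro r hr; exact hxm r hr
  have hIeq : ((Ideal.ofList xs) • ⊤ : Submodule R R) = Ideal.ofList xs := by
    rw [smul_eq_mul, Ideal.mul_top]
  -- key contradiction from a socle element of R / xs
  have key : ∀ r : R, r ∉ ((Ideal.ofList xs) • ⊤ : Submodule R R) →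
      (∀ a ∈ maximalIdeal R, a • r ∈ ((Ideal.ofList xs) • ⊤ : Submodule R R)) → False := by
    intro r hr1 hr2
    have hr2' : ∀ a ∈ maximalIdeal R, a * r ∈ Ideal.ofList xs := by
      intro a ha
      have := hr2 a ha
      rwa [hIeq, smul_eq_mul] at this
    have hstep1 : ∀ j : Fin k, i ((f r) j) ∈
        ((Ideal.ofList xs) • ⊤ : Submodule R (Fin n → R)) := by
      intro j
      have h1 : (f r) j = r • (f 1) j := by
        have hfr : f r = r • f 1 := by rw [← map_smul, smul_eq_mul, mul_one]
        rw [hfr]; rfl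
      rw [h1, map_smul]
      exact smul_socle_mem _ hr2' (h (LinearMap.mem_range_self i ((f 1) j)))
    have hstep2 : ∀ j : Fin k, (f r) j ∈ ((Ideal.ofList xs) • ⊤ : Submodule R M) := fun j =>
      mem_smul_top_of_apply_mem_smul_top hi hexact hp hwX (hstep1 j)
    have hstep3 : f r ∈ ((Ideal.ofList xs) • ⊤ : Submodule R (Fin k → M)) :=
      pi_mem_smul_top _ hstep2
    exact hr1 (mem_smul_top_of_apply_mem_smul_top hf hfg hg hwY hstep3)
  have keyQ : NoReg R (R ⧸ ((Ideal.ofList xs) • ⊤ : Submodule R R)) → False := by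
    intro hnrR
    haveI : Nontrivial (R ⧸ ((Ideal.ofList xs) • ⊤ : Submodule R R)) :=
      quot_smul_top_nontrivial R hIm
    obtain ⟨q, hq0, hqkill⟩ :=
      socle_exists (R ⧸ ((Ideal.ofList xs) • ⊤ : Submodule R R)) hnrR
    obtain ⟨r, rfl⟩ := Submodule.Quotient.mk_surjective _ q
    refine key r (fun hmem => hq0 ((Submodule.Quotient.mk_eq_zero _).mpr hmem)) ?_
    intro a ha
    have h1 := hqkill a ha
    exact (Submodule.Quotient.mk_eq_zero _).mp h1
  -- socle of the product of the three quotients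
  haveI : Nontrivial (R ⧸ ((Ideal.ofList xs) • ⊤ : Submodule R R)) :=
    quot_smul_top_nontrivial R hIm
  haveI : Nontrivial ((R ⧸ ((Ideal.ofList xs) • ⊤ : Submodule R R)) ×
      (X ⧸ ((Ideal.ofList xs) • ⊤ : Submodule R X)) ×
      (Y ⧸ ((Ideal.ofList xs) • ⊤ : Submodule R Y))) := by
    obtain ⟨a, b, hab⟩ := exists_pair_ne (R ⧸ ((Ideal.ofList xs) • ⊤ : Submodule R R))
    exact ⟨(a, 0, 0), (b, 0, 0), fun hEq => hab (congrArg Prod.fst hEq)⟩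
  obtain ⟨s, hs0, hskill⟩ := socle_exists
    ((R ⧸ ((Ideal.ofList xs) • ⊤ : Submodule R R)) ×
      (X ⧸ ((Ideal.ofList xs) • ⊤ : Submodule R X)) ×
      (Y ⧸ ((Ideal.ofList xs) • ⊤ : Submodule R Y))) hnr
  have hcomp : s.1 ≠ 0 ∨ s.2.1 ≠ 0 ∨ s.2.2 ≠ 0 := by
    by_contra hcon
    push_neg at hcon
    exact hs0 (Prod.ext hcon.1 (Prod.ext hcon.2.1 hcon.2.2))
  rcases hcomp with hc | hc | hc
  · obtain ⟨r, hr⟩ := Submodule.Quotient.mk_surjective _ s.1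
    refine key r ?_ ?_
    · intro hmem
      exact hc (by rw [← hr]; exact (Submodule.Quotient.mk_eq_zero _).mpr hmem)
    · intro a ha
      have h1 : a • s.1 = 0 := congrArg Prod.fst (hskill a ha)
      rw [← hr] at h1
      exact (Submodule.Quotient.mk_eq_zero _).mp h1
  · have hnrX : NoReg R (X ⧸ ((Ideal.ofList xs) • ⊤ : Submodule R X)) := by
      intro a ha hreg
      have h1 : a • s.2.1 = 0 := congrArg (fun z => z.2.1) (hskill a ha)
      exact hc (hreg (show a • s.2.1 = a • 0 by rw [smul_zero, h1]))
    haveI : Nontrivial X := by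
      rcases subsingleton_or_nontrivial X with hsX | hsX
      · haveI : Subsingleton (X ⧸ ((Ideal.ofList xs) • ⊤ : Submodule R X)) :=
          (Submodule.mkQ_surjective _).subsingleton
        exact absurd (Subsingleton.elim s.2.1 0) hc
      · exact hsX
    have hXdepth : rdepth R X = xs.length := rdepth_eq_of_maximal X hxm hwX hnrX
    by_cases hnrR : NoReg R (R ⧸ ((Ideal.ofList xs) • ⊤ : Submodule R R))
    · exact keyQ hnrR
    · simp only [NoReg, not_forall] at hnrR
      obtain ⟨z, hzm, hz⟩ := hnrR
      rw [not_not] at hz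
      have happ : IsWeaklyRegular R (xs ++ [z]) := by
        rw [isWeaklyRegular_append_iff]
        exact ⟨hwR, by rwa [isWeaklyRegular_singleton_iff]⟩
      have hge := rdepth_ge_of_wreg R (xs := xs ++ [z])
        (by
          intro a ha
          rcases List.mem_append.mp ha with ha | ha
          · exact hxm a ha
          · rw [List.mem_singleton.mp ha]; exact hzm) happ
      have hge' : xs.length + 1 ≤ rdepth R R := by simpa using hge
      omega
  · have hnrY : NoReg R (Y ⧸ ((Ideal.ofList xs) • ⊤ : Submodule R Y)) := by
      intro a ha hreg
      have h1 : a • s.2.2 = 0 := congrArg (fun z => z.2.2) (hskill a ha)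
      exact hc (hreg (show a • s.2.2 = a • 0 by rw [smul_zero, h1]))
    haveI : Nontrivial Y := by
      rcases subsingleton_or_nontrivial Y with hsY | hsY
      · haveI : Subsingleton (Y ⧸ ((Ideal.ofList xs) • ⊤ : Submodule R Y)) :=
          (Submodule.mkQ_surjective _).subsingleton
        exact absurd (Subsingleton.elim s.2.2 0) hc
      · exact hsY
    have hYdepth : rdepth R Y = xs.length := rdepth_eq_of_maximal Y hxm hwY hnrY
    by_cases hnrR : NoReg R (R ⧸ ((Ideal.ofList xs) • ⊤ : Submodule R R))
    · exact keyQ hnrR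
    · simp only [NoReg, not_forall] at hnrR
      obtain ⟨z, hzm, hz⟩ := hnrR
      rw [not_not] at hz
      have happ : IsWeaklyRegular R (xs ++ [z]) := by
        rw [isWeaklyRegular_append_iff]
        exact ⟨hwR, by rwa [isWeaklyRegular_singleton_iff]⟩
      have hge := rdepth_ge_of_wreg R (xs := xs ++ [z])
        (by
          intro a ha
          rcases List.mem_append.mp ha with ha | ha
          · exact hxm a ha
          · rw [List.mem_singleton.mp ha]; exact hzm) happ
      have hge' : xs.length + 1 ≤ rdepth R R := by simpa using hge
      omega

end Part6

end Auxiliary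

/-- Let `(R, m)` be a commutative Noetherian local ring and let `M` be a
finitely generated `R`-module fitting into an exact sequence `0 → M →ⁱ R^{⊕n} → X → 0` with
`depth_R(X) ≥ depth(R)`.  If `M ∈ DF(R)`, then `im(i) ⊄ m·R^{⊕n}`; that is, `M` is not a
minimal syzygy of `X`. -/
theorem not_minimal_syzygy {R M X : Type*} [CommRing R] [IsNoetherianRing R] [IsLocalRing R]
    [AddCommGroup M] [Module R M] [Module.Finite R M]
    [AddCommGroup X] [Module R X] [Module.Finite R X]
    {n : ℕ} (i : M →ₗ[R] (Fin n → R)) (p : (Fin n → R) →ₗ[R] X)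
    (hi : Function.Injective i) (hp : Function.Surjective p) (hexact : Function.Exact i p)
    (hdeep : rdepth R R ≤ rdepth R X)
    (hDF : DF R M) :
    ¬ (LinearMap.range i ≤ (maximalIdeal R) • (⊤ : Submodule R (Fin n → R))) := by
  obtain ⟨k, Y, iY1, iY2, f, g, hf, hg, hfg, hYfin, hYdeep⟩ := hDF
  exact not_minimal_syzygy' i p hi hp hexact hdeep f g hf hg hfg hYfin hYdeep
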